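/- arXiv:1811.11501 — 2 statements merged into one kernel-verified Lean document; each statement's English description precedes it below -/
import Mathlib

section
/- If an argumentation framework has at least one stable extension, then every semi-stable extension is stable. -/
def conflictFree {α : Type*} (R : α → α → Prop) (S : Set α) : Prop :=
  ∀ a ∈ S, ∀ b ∈ S, ¬ R a b

def defends {α : Type*} (R : α → α → Prop) (S : Set α) (a : α) : Prop :=
  ∀ b, R b a → ∃ s ∈ S, R s b

def admissible {α : Type*} (R : α → α → Prop) (S : Set α) : Prop :=
  conflictFree R S ∧ ∀ a ∈ S, defends R S a

def defSet {α : Type*} (R : α → α → Prop) (S : Set α) : Set α :=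
  {a | defends R S a}

def stable {α : Type*} (R : α → α → Prop) (S : Set α) : Prop :=
  conflictFree R S ∧ ∀ a, a ∉ S → ∃ s ∈ S, R s a

def afRange {α : Type*} (R : α → α → Prop) (S : Set α) : Set α :=
  S ∪ {a | ∃ b ∈ S, R b a}

def complete {α : Type*} (R : α → α → Prop) (S : Set α) : Prop :=
  admissible R S ∧ defSet R S = S

def preferred {α : Type*} (R : α → α → Prop) (S : Set α) : Prop :=
  admissible R S ∧ ∀ T, admissible R T → S ⊆ T → T = S

def semiStable {α : Type*} (R : α → α → Prop) (S : Set α) : Prop :=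
  admissible R S ∧ ∀ T, admissible R T → ¬ afRange R S ⊂ afRange R T

def stage {α : Type*} (R : α → α → Prop) (S : Set α) : Prop :=
  conflictFree R S ∧ ∀ T, conflictFree R T → ¬ afRange R S ⊂ afRange R T

lemma stable_admissible {α : Type*} {R : α → α → Prop} {S : Set α} (h : stable R S) :
    admissible R S := by
  refine ⟨h.1, fun a ha b hb => ?_⟩
  by_cases hbS : b ∈ S
  · exact absurd hb (h.1 b hbS a ha)
  · exact h.2 b hbS

lemma stable_range {α : Type*} {R : α → α → Prop} {S : Set α} (h : stable R S) :
    afRange R S = Set.univ := by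
  ext a
  simp only [Set.mem_univ, iff_true, afRange, Set.mem_union, Set.mem_setOf_eq]
  by_cases ha : a ∈ S
  · exact Or.inl ha
  · exact Or.inr (h.2 a ha)

theorem semiStable_stable_of_exists_stable {α : Type*} [Fintype α] (R : α → α → Prop)
    (hex : ∃ E : Set α, stable R E) :
    ∀ S : Set α, semiStable R S → stable R S := by
  obtain ⟨E, hE⟩ := hex
  intro S hS
  have hrange : afRange R S = Set.univ := by
    by_contra hne
    exact hS.2 E (stable_admissible hE) (by
      rw [stable_range hE]
      exact Set.ssubset_univ_iff.mpr hne)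
  refine ⟨hS.1.1, fun a ha => ?_⟩
  have : a ∈ afRange R S := hrange ▸ Set.mem_univ a
  rcases this with h | h
  · exact absurd h ha
  · exact h
end

section
/- If S is admissible in F = (A,R) and argument a ∈ A is defended by S and S ∪ {a} is conflict-free, then S ∪ {a} is admissible. Moreover if a is defended by S then S ∪ {a} is automatically conflict-free, so S ∪ {a} is admissible. -/
theorem admissible_insert_defended {α : Type*} (R : α → α → Prop) (S : Set α) (a : α)
    (hadm : admissible R S) (hdef : defends R S a) :
    (conflictFree R (S ∪ {a}) → admissible R (S ∪ {a})) ∧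
    conflictFree R (S ∪ {a}) ∧ admissible R (S ∪ {a}) := by
  obtain ⟨hcf, hdefS⟩ := hadm
  have hcf' : conflictFree R (S ∪ {a}) := by
    rintro x (hx | rfl) y (hy | rfl) hxy
    · exact hcf x hx y hy hxy
    · obtain ⟨t, ht, htx⟩ := hdef x hxy
      exact hcf t ht x hx htx
    · obtain ⟨t, ht, hta⟩ := hdefS y hy x hxy
      obtain ⟨u, hu, hut⟩ := hdef t hta
      exact hcf u hu t ht hut
    · obtain ⟨s, hs, hsa⟩ := hdef _ hxy
      obtain ⟨u, hu, hus⟩ := hdef s hsa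
      exact hcf u hu s hs hus
  have hmain : admissible R (S ∪ {a}) := by
    refine ⟨hcf', ?_⟩
    rintro x (hx | rfl) b hbx
    · obtain ⟨s, hs, hsb⟩ := hdefS x hx b hbx
      exact ⟨s, Or.inl hs, hsb⟩
    · obtain ⟨s, hs, hsb⟩ := hdef b hbx
      exact ⟨s, Or.inl hs, hsb⟩
  exact ⟨fun _ => hmain, hcf', hmain⟩
end
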